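/- Let f : EuclideanSpace ℝ (Fin n) → ℝ be twice continuously differentiable, bounded below by f_low, with Hessian ∇²f Lipschitz continuous in operator norm. Consider iterates of the second-order IBO trust-region algorithm: sequences x_k, Δ_k with 0 < Δ_0 ≤ Δ_max, quadratic models m_k about x_k with data (c_k, g_k, H_k), H_k symmetric with ‖H_k‖ ≤ κ_H − 1 for some κ_H ≥ 1, each m_k fully quadratic for f in B(x_k, Δ_k) with constants κ_mf, κ_mg, κ_mh > 0 independent of k, and steps s_k with ‖s_k‖ ≤ Δ_k and m_k(x_k) − m_k(x_k + s_k) ≥ κ_s·max(‖g_k‖·min(Δ_k, ‖g_k‖/(‖H_k‖ + 1)), τ(H_k)·Δ_k²) for some κ_s ∈ (0, 1/2); with ρ_k := (f(x_k) − f(x_k + s_k))/(m_k(x_k) − m_k(x_k + s_k)) and σ^m_k := max(‖g_k‖, τ(H_k)), the updates are: if ρ_k ≥ η_S and σ^m_k ≥ μ_c·Δ_k then x_{k+1} = x_k + s_k and Δ_{k+1} = min(γ_inc·Δ_k, Δ_max); otherwise if ρ_k ≥ η_U and σ^m_k ≥ μ_c·Δ_k then x_{k+1} = x_k + s_k and Δ_{k+1}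 = Δ_k; otherwise x_{k+1} = x_k and Δ_{k+1} = γ_dec·Δ_k, where 0 < γ_dec < 1 < γ_inc, 0 < η_U ≤ η_S < 1, μ_c > 0. Set σ_k := max(‖∇f(x_k)‖, τ(∇²f(x_k))) and κ_σ := max(κ_mg·Δ_max, κ_mh). If ε > 0 and σ_k ≥ ε for all k = 0, …, K−1, then K ≤ log(Δ_0/Δ_min(ε))/log(1/γ_dec) + (1 + log(γ_inc)/log(1/γ_dec))·(1 + κ_σ/μ_c)·(f(x_0) − f_low)/(η_U·κ_s·min(ε·Δ_min(ε), ε·Δ_min(ε)²)), where Δ_min(ε) := min(Δ_0, γ_dec·ε/(max(2κ_mf·Δ_max/(κ_s·(1 − η_S)), κ_H, μ_c) + κ_σ), γ_dec·ε/(max(2κ_mf/(κ_s·(1 − η_S)), μ_c) + κ_σ), ε/((1 + κ_σ/μ_c)·κ_H)). -/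

import Mathlib

open scoped RealInnerProductSpace
open Metric

noncomputable section

/-- Matrix–vector multiplication as a map on Euclidean space. -/
def mulVecE {n : ℕ} (H : Matrix (Fin n) (Fin n) ℝ) (v : EuclideanSpace ℝ (Fin n)) :
    EuclideanSpace ℝ (Fin n) :=
  (EuclideanSpace.equiv (Fin n) ℝ).symm (H.mulVec (EuclideanSpace.equiv (Fin n) ℝ v))

/-- Operator 2-norm of a matrix (the norm induced by the Euclidean vector norm). -/
def opNorm {n : ℕ} (H : Matrix (Fin n) (Fin n) ℝ) : ℝ :=
  sSup {r : ℝ | ∃ v : EuclideanSpace ℝ (Fin n), ‖v‖ ≤ 1 ∧ r = ‖mulVecE H v‖}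

/-- Quadratic model about `x` with data `(c, g, H)`. -/
def qm {n : ℕ} (x : EuclideanSpace ℝ (Fin n)) (c : ℝ) (g : EuclideanSpace ℝ (Fin n))
    (H : Matrix (Fin n) (Fin n) ℝ) (y : EuclideanSpace ℝ (Fin n)) : ℝ :=
  c + ⟪g, y - x⟫ + (1 / 2) * ⟪y - x, mulVecE H (y - x)⟫

/-- `m` is a fully linear model for `f` on the closed ball `B(x, Δ)`. -/
def IsFullyLinear {n : ℕ} (f m : EuclideanSpace ℝ (Fin n) → ℝ)
    (x : EuclideanSpace ℝ (Fin n)) (Δ κmf κmg : ℝ) : Prop :=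
  ∀ y ∈ closedBall x Δ,
    |m y - f y| ≤ κmf * Δ ^ 2 ∧ ‖gradient m y - gradient f y‖ ≤ κmg * Δ

/-- `m` is a fully quadratic model for `f` on the closed ball `B(x, Δ)`. -/
def IsFullyQuadratic {n : ℕ} (f m : EuclideanSpace ℝ (Fin n) → ℝ)
    (x : EuclideanSpace ℝ (Fin n)) (Δ κmf κmg κmh : ℝ) : Prop :=
  ∀ y ∈ closedBall x Δ,
    |m y - f y| ≤ κmf * Δ ^ 3 ∧ ‖gradient m y - gradient f y‖ ≤ κmg * Δ ^ 2 ∧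
      ‖fderiv ℝ (gradient m) y - fderiv ℝ (gradient f) y‖ ≤ κmh * Δ

/-- Smallest eigenvalue of a symmetric matrix: the minimum of `⟪u, H u⟫` over unit vectors. -/
def lambdaMin {n : ℕ} (H : Matrix (Fin n) (Fin n) ℝ) : ℝ :=
  sInf {r : ℝ | ∃ u : EuclideanSpace ℝ (Fin n), ‖u‖ = 1 ∧ r = ⟪u, mulVecE H u⟫}

/-- `τ(H) = max(-λ_min(H), 0)`. -/
def tau {n : ℕ} (H : Matrix (Fin n) (Fin n) ℝ) : ℝ := max (-lambdaMin H) 0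

/-- Hessian matrix of `f` at `x`. -/
def hessMat {n : ℕ} (f : EuclideanSpace ℝ (Fin n) → ℝ) (x : EuclideanSpace ℝ (Fin n)) :
    Matrix (Fin n) (Fin n) ℝ :=
  Matrix.of fun i j => fderiv ℝ (gradient f) x (EuclideanSpace.single j 1) i

/-- ℓ∞ operator norm of a matrix: the maximum absolute row sum. -/
def linftyNorm {m k : Type*} [Fintype m] [Fintype k] (A : Matrix m k ℝ) : ℝ :=
  sSup (Set.range fun i => ∑ j, |A i j|)

section Aux
variable {n : ℕ}
local notation "E" => EuclideanSpace ℝ (Fin n)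

/-- `mulVecE` as a continuous linear map. -/
def mulVecL (H : Matrix (Fin n) (Fin n) ℝ) : E →L[ℝ] E :=
  LinearMap.toContinuousLinearMap <|
    ((EuclideanSpace.equiv (Fin n) ℝ).symm.toLinearEquiv.toLinearMap.comp
      (H.mulVecLin.comp (EuclideanSpace.equiv (Fin n) ℝ).toLinearEquiv.toLinearMap))

lemma mulVecL_apply (H : Matrix (Fin n) (Fin n) ℝ) (v : E) : mulVecL H v = mulVecE H v := rfl

lemma mulVecE_zero (H : Matrix (Fin n) (Fin n) ℝ) : mulVecE H 0 = 0 :=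
  (mulVecL H).map_zero

lemma inner_mulVecE (H : Matrix (Fin n) (Fin n) ℝ) (u v : E) :
    ⟪u, mulVecE H v⟫ = dotProduct (fun i => u i) (H.mulVec fun i => v i) := by
  simp [mulVecE, PiLp.inner_apply, RCLike.inner_apply, dotProduct]
  exact Finset.sum_congr rfl fun _ _ => mul_comm _ _

lemma inner_mulVecE_symm {H : Matrix (Fin n) (Fin n) ℝ} (hH : H.IsSymm) (u v : E) :
    ⟪u, mulVecE H v⟫ = ⟪mulVecE H u, v⟫ := by
  rw [inner_mulVecE, real_inner_comm, inner_mulVecE, Matrix.dotProduct_mulVec,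
    ← Matrix.mulVec_transpose, hH.eq, dotProduct_comm]

lemma hasGradientAt_qm (x : E) (c : ℝ) (g : E) {H : Matrix (Fin n) (Fin n) ℝ}
    (hH : H.IsSymm) (y : E) :
    HasGradientAt (qm x c g H) (g + mulVecE H (y - x)) y := by
  have h1 : HasFDerivAt (fun z : E => z - x) (ContinuousLinearMap.id ℝ E) y :=
    (hasFDerivAt_id y).sub_const x
  have h3 : HasFDerivAt (fun z : E => mulVecE H (z - x))
      ((mulVecL H).comp (ContinuousLinearMap.id ℝ E)) y :=
    (mulVecL H).hasFDerivAt.comp y h1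
  have h2 := (hasFDerivAt_const g y).inner ℝ h1
  have h4 := (h1.inner ℝ h3).const_mul (1 / 2 : ℝ)
  have h5 := ((hasFDerivAt_const c y).add h2).add h4
  rw [hasGradientAt_iff_hasFDerivAt]
  refine (h5.congr_fderiv ?_)
  ext v
  simp only [ContinuousLinearMap.add_apply, ContinuousLinearMap.coe_comp', Function.comp_apply,
    fderivInnerCLM_apply, ContinuousLinearMap.prod_apply, ContinuousLinearMap.coe_id',
    id_eq, ContinuousLinearMap.zero_apply, ContinuousLinearMap.smul_apply,
    InnerProductSpace.toDual_apply_apply, inner_add_left, inner_zero_left,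
    ContinuousLinearMap.coe_smul']
  rw [mulVecL_apply, inner_mulVecE_symm hH]
  rw [real_inner_comm v (mulVecE H (y - x))]
  simp only [smul_eq_mul]
  ring

lemma gradient_qm (x : E) (c : ℝ) (g : E) {H : Matrix (Fin n) (Fin n) ℝ}
    (hH : H.IsSymm) :
    gradient (qm x c g H) = fun y => g + mulVecE H (y - x) :=
  gradient_eq fun y => hasGradientAt_qm x c g hH y

lemma fderiv_grad_aff (g x : E) (H : Matrix (Fin n) (Fin n) ℝ) (y : E) :
    fderiv ℝ (fun z : E => g + mulVecE H (z - x)) y = mulVecL H := by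
  have h3 : HasFDerivAt (fun z : E => mulVecE H (z - x))
      ((mulVecL H).comp (ContinuousLinearMap.id ℝ E)) y :=
    (mulVecL H).hasFDerivAt.comp y ((hasFDerivAt_id y).sub_const x)
  exact ((h3.const_add g).congr_fderiv (ContinuousLinearMap.comp_id _)).fderiv

lemma abs_inner_clm_le (B : E →L[ℝ] E) {u : E} (hu : ‖u‖ = 1) : |⟪u, B u⟫| ≤ ‖B‖ := by
  calc |⟪u, B u⟫| ≤ ‖u‖ * ‖B u‖ := abs_real_inner_le_norm _ _
  _ ≤ ‖u‖ * (‖B‖ * ‖u‖) := by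
      exact mul_le_mul_of_nonneg_left (B.le_opNorm u) (norm_nonneg u)
  _ = ‖B‖ := by rw [hu]; ring

lemma opNorm_nonneg' (H : Matrix (Fin n) (Fin n) ℝ) : 0 ≤ opNorm H := by
  apply le_csSup
  · refine ⟨‖mulVecL H‖, ?_⟩
    rintro r ⟨v, hv, rfl⟩
    rw [← mulVecL_apply]
    calc ‖mulVecL H v‖ ≤ ‖mulVecL H‖ * ‖v‖ := (mulVecL H).le_opNorm v
    _ ≤ ‖mulVecL H‖ * 1 := by
        exact mul_le_mul_of_nonneg_left hv (norm_nonneg _)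
    _ = ‖mulVecL H‖ := mul_one _
  · exact ⟨0, by simp, by rw [mulVecE_zero, norm_zero]⟩

lemma lambdaMin_le_lambdaMin {A B : Matrix (Fin n) (Fin n) ℝ} {δ : ℝ} (hδ : 0 ≤ δ)
    (h : ∀ u : E, ‖u‖ = 1 → ⟪u, mulVecE A u⟫ ≤ ⟪u, mulVecE B u⟫ + δ) :
    lambdaMin A ≤ lambdaMin B + δ := by
  rcases Nat.eq_zero_or_pos n with h0 | hn
  · have hempty : ∀ (M : Matrix (Fin n) (Fin n) ℝ), lambdaMin M = 0 := by
      intro M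
      unfold lambdaMin
      convert Real.sInf_empty using 2
      rw [Set.eq_empty_iff_forall_notMem]
      rintro r ⟨u, hu, -⟩
      have hu0 : u = 0 := by
        subst h0; exact Subsingleton.elim _ _
      rw [hu0, norm_zero] at hu
      norm_num at hu
    rw [hempty, hempty]; linarith
  · have : NeZero n := ⟨hn.ne'⟩
    set u0 : E := EuclideanSpace.single 0 1 with hu0def
    have hu0 : ‖u0‖ = 1 := by
      rw [hu0def, EuclideanSpace.norm_single, norm_one]
    have hbdd : BddBelow {r : ℝ | ∃ u : E, ‖u‖ = 1 ∧ r = ⟪u, mulVecE A u⟫} := by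
      refine ⟨-‖mulVecL A‖, ?_⟩
      rintro r ⟨u, hu, rfl⟩
      have h1 : |⟪u, mulVecE A u⟫| ≤ ‖mulVecL A‖ := by
        rw [← mulVecL_apply]; exact abs_inner_clm_le _ hu
      linarith [(abs_le.mp h1).1]
    have h2 : lambdaMin A - δ ≤ lambdaMin B := by
      have hne : {r : ℝ | ∃ u : E, ‖u‖ = 1 ∧ r = ⟪u, mulVecE B u⟫}.Nonempty :=
        ⟨_, u0, hu0, rfl⟩
      refine le_csInf hne ?_
      rintro b ⟨u, hu, rfl⟩
      have h3 : lambdaMin A ≤ ⟪u, mulVecE A u⟫ := csInf_le hbdd ⟨u, hu, rfl⟩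
      linarith [h u hu]
    linarith

lemma mulVecE_hessMat (f : E → ℝ) (x : E) (v : E) :
    mulVecE (hessMat f x) v = fderiv ℝ (gradient f) x v := by
  set D := fderiv ℝ (gradient f) x with hD
  have hv : ∑ j, v j • (EuclideanSpace.single j (1:ℝ) : E) = v := by
    have := (EuclideanSpace.basisFun (Fin n) ℝ).sum_repr' v
    simpa [EuclideanSpace.basisFun_apply, EuclideanSpace.inner_single_left] using this
  have happ : ∀ (w : E) (i : Fin n), w i = ⟪EuclideanSpace.single i (1:ℝ), w⟫ := by
    intro w i
    rw [EuclideanSpace.inner_single_left]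
    simp
  ext i
  have lhs : mulVecE (hessMat f x) v i = ∑ j, (D (EuclideanSpace.single j 1) i) * v j := by
    simp [mulVecE, Matrix.mulVec, dotProduct, hessMat]
    rfl
  rw [lhs, happ (D v) i]
  conv_rhs => rw [← hv]
  rw [map_sum, inner_sum]
  congr 1
  ext j
  rw [map_smul, inner_smul_right, ← happ]
  ring

end Aux

set_option maxHeartbeats 4000000 in
/-- Second-order worst-case complexity bound for the IBO trust-region method
(Theorem `thm_wcc_dfo_2`). -/
theorem ibo_second_order_complexity {n : ℕ}
    (f : EuclideanSpace ℝ (Fin n) → ℝ) (hf : ContDiff ℝ 2 f)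
    (flow : ℝ) (hflow : ∀ y, flow ≤ f y)
    (LH : NNReal) (hLip : LipschitzWith LH (fun y => fderiv ℝ (gradient f) y))
    (x : ℕ → EuclideanSpace ℝ (Fin n)) (Δ : ℕ → ℝ) (hΔpos : ∀ k, 0 < Δ k)
    (Δmax : ℝ) (hΔ0max : Δ 0 ≤ Δmax)
    (cm : ℕ → ℝ) (g : ℕ → EuclideanSpace ℝ (Fin n))
    (H : ℕ → Matrix (Fin n) (Fin n) ℝ) (hHsymm : ∀ k, (H k).IsSymm)
    (κH : ℝ) (hκH : 1 ≤ κH) (hHnorm : ∀ k, opNorm (H k) ≤ κH - 1)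
    (m : ℕ → EuclideanSpace ℝ (Fin n) → ℝ)
    (hm : ∀ k y, m k y = qm (x k) (cm k) (g k) (H k) y)
    (κmf κmg κmh : ℝ) (hκmf : 0 < κmf) (hκmg : 0 < κmg) (hκmh : 0 < κmh)
    (hFQ : ∀ k, IsFullyQuadratic f (m k) (x k) (Δ k) κmf κmg κmh)
    (s : ℕ → EuclideanSpace ℝ (Fin n)) (hs : ∀ k, ‖s k‖ ≤ Δ k)
    (κs : ℝ) (hκs : κs ∈ Set.Ioo (0 : ℝ) (1 / 2))
    (hdec : ∀ k, κs * max (‖g k‖ * min (Δ k) (‖g k‖ / (opNorm (H k) + 1)))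
        (tau (H k) * Δ k ^ 2) ≤ m k (x k) - m k (x k + s k))
    (γdec γinc ηU ηS μc : ℝ)
    (hγdec0 : 0 < γdec) (hγdec1 : γdec < 1) (hγinc : 1 < γinc)
    (hηU : 0 < ηU) (hηUS : ηU ≤ ηS) (hηS : ηS < 1) (hμc : 0 < μc)
    (ρ : ℕ → ℝ)
    (hρ : ∀ k, ρ k = (f (x k) - f (x k + s k)) / (m k (x k) - m k (x k + s k)))
    (σm : ℕ → ℝ) (hσm : ∀ k, σm k = max ‖g k‖ (tau (H k)))
    (hVS : ∀ k, (ηS ≤ ρ k ∧ μc * Δ k ≤ σm k) →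
      x (k + 1) = x k + s k ∧ Δ (k + 1) = min (γinc * Δ k) Δmax)
    (hS : ∀ k, ¬(ηS ≤ ρ k ∧ μc * Δ k ≤ σm k) → (ηU ≤ ρ k ∧ μc * Δ k ≤ σm k) →
      x (k + 1) = x k + s k ∧ Δ (k + 1) = Δ k)
    (hU : ∀ k, ¬(ηU ≤ ρ k ∧ μc * Δ k ≤ σm k) →
      x (k + 1) = x k ∧ Δ (k + 1) = γdec * Δ k)
    (σ : ℕ → ℝ)
    (hσ : ∀ k, σ k = max ‖gradient f (x k)‖ (tau (hessMat f (x k))))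
    (κσ : ℝ) (hκσ : κσ = max (κmg * Δmax) κmh)
    (ε : ℝ) (hε : 0 < ε) (K : ℕ)
    (hcrit : ∀ k < K, ε ≤ σ k)
    (Δmin : ℝ)
    (hΔmin : Δmin = min (Δ 0)
      (min (γdec * ε / (max (max (2 * κmf * Δmax / (κs * (1 - ηS))) κH) μc + κσ))
        (min (γdec * ε / (max (2 * κmf / (κs * (1 - ηS))) μc + κσ))
          (ε / ((1 + κσ / μc) * κH))))) :
    (K : ℝ) ≤ Real.log (Δ 0 / Δmin) / Real.log (1 / γdec) +
      (1 + Real.log γinc / Real.log (1 / γdec)) *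
        ((1 + κσ / μc) * (f (x 0) - flow) /
          (ηU * κs * min (ε * Δmin) (ε * Δmin ^ 2))) := by
  classical
  have hΔmaxpos : (0:ℝ) < Δmax := lt_of_lt_of_le (hΔpos 0) hΔ0max
  have hκs0 : (0:ℝ) < κs := hκs.1
  have hκshalf : κs < 1/2 := hκs.2
  have h1ηS : (0:ℝ) < 1 - ηS := by linarith
  have hκσ1 : κmg * Δmax ≤ κσ := hκσ ▸ le_max_left _ _
  have hκσ2 : κmh ≤ κσ := hκσ ▸ le_max_right _ _
  have hκσpos : 0 < κσ := lt_of_lt_of_le hκmh hκσ2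
  have hκHpos : (0:ℝ) < κH := lt_of_lt_of_le one_pos hκH
  set C1 := max (max (2 * κmf * Δmax / (κs * (1 - ηS))) κH) μc with hC1def
  set C2 := max (2 * κmf / (κs * (1 - ηS))) μc with hC2def
  set c := 1 + κσ / μc with hcdef
  have hcpos : 0 < c := by
    have : 0 < κσ / μc := div_pos hκσpos hμc
    rw [hcdef]; linarith
  have hC1κH : κH ≤ C1 := le_trans (le_max_right _ _) (le_max_left _ _)
  have hC1μ : μc ≤ C1 := le_max_right _ _
  have hC1A : 2 * κmf * Δmax / (κs * (1 - ηS)) ≤ C1 :=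
    le_trans (le_max_left _ _) (le_max_left _ _)
  have hC2A : 2 * κmf / (κs * (1 - ηS)) ≤ C2 := le_max_left _ _
  have hC2μ : μc ≤ C2 := le_max_right _ _
  have hC1pos : 0 < C1 := lt_of_lt_of_le hμc hC1μ
  have hC2pos : 0 < C2 := lt_of_lt_of_le hμc hC2μ
  have hΔmin1 : Δmin ≤ Δ 0 := by rw [hΔmin]; exact min_le_left _ _
  have hΔmin2 : Δmin ≤ γdec * ε / (C1 + κσ) := by
    rw [hΔmin]; exact le_trans (min_le_right _ _) (min_le_left _ _)
  have hΔmin3 : Δmin ≤ γdec * ε / (C2 + κσ) := by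
    rw [hΔmin]
    exact le_trans (min_le_right _ _) (le_trans (min_le_right _ _) (min_le_left _ _))
  have hΔmin4 : Δmin ≤ ε / (c * κH) := by
    rw [hΔmin]
    exact le_trans (min_le_right _ _) (le_trans (min_le_right _ _) (min_le_right _ _))
  have hΔminpos : 0 < Δmin := by
    rw [hΔmin]
    refine lt_min (hΔpos 0) (lt_min ?_ (lt_min ?_ ?_)) <;> positivity
  have hΔub : ∀ k, Δ k ≤ Δmax := by
    intro k
    induction k with
    | zero => exact hΔ0max
    | succ k ih =>
      by_cases hb1 : ηS ≤ ρ k ∧ μc * Δ k ≤ σm k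
      · rw [(hVS k hb1).2]; exact min_le_right _ _
      · by_cases hb2 : ηU ≤ ρ k ∧ μc * Δ k ≤ σm k
        · rw [(hS k hb1 hb2).2]; exact ih
        · rw [(hU k hb2).2]
          have := mul_le_mul_of_nonneg_right hγdec1.le (hΔpos k).le
          linarith
  have hgrad : ∀ k, gradient (m k) = fun y => g k + mulVecE (H k) (y - x k) := by
    intro k
    have hmq : m k = qm (x k) (cm k) (g k) (H k) := funext (hm k)
    rw [hmq, gradient_qm _ _ _ (hHsymm k)]
  have hgradx : ∀ k, gradient (m k) (x k) = g k := by
    intro k; rw [hgrad k]; simp [mulVecE_zero]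
  have hfdg : ∀ k (y : EuclideanSpace ℝ (Fin n)),
      fderiv ℝ (gradient (m k)) y = mulVecL (H k) := by
    intro k y; rw [hgrad k]; exact fderiv_grad_aff _ _ _ y
  have hxmem : ∀ k, x k ∈ closedBall (x k) (Δ k) := fun k => mem_closedBall_self (hΔpos k).le
  have hsmem : ∀ k, x k + s k ∈ closedBall (x k) (Δ k) := by
    intro k
    rw [mem_closedBall, dist_eq_norm]
    simpa using hs k
  have hFQf : ∀ k, |m k (x k) - f (x k)| ≤ κmf * Δ k ^ 3 := fun k => ((hFQ k) _ (hxmem k)).1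
  have hFQfs : ∀ k, |m k (x k + s k) - f (x k + s k)| ≤ κmf * Δ k ^ 3 :=
    fun k => ((hFQ k) _ (hsmem k)).1
  have hFQg : ∀ k, ‖g k - gradient f (x k)‖ ≤ κmg * Δ k ^ 2 := by
    intro k; have h := ((hFQ k) _ (hxmem k)).2.1; rwa [hgradx k] at h
  have hFQH : ∀ k, ‖mulVecL (H k) - fderiv ℝ (gradient f) (x k)‖ ≤ κmh * Δ k := by
    intro k; have h := ((hFQ k) _ (hxmem k)).2.2; rwa [hfdg k] at h
  have htau0 : ∀ k, 0 ≤ tau (H k) := fun k => le_max_right _ _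
  have hσle : ∀ k, σ k ≤ σm k + κσ * Δ k := by
    intro k
    have hΔk := hΔpos k
    have hΔkM := hΔub k
    rw [hσ, hσm]
    have hg2 : ‖gradient f (x k)‖ ≤ ‖g k‖ + κσ * Δ k := by
      have h2 : κmg * Δ k ^ 2 ≤ κσ * Δ k := by
        have u1 : κmg * Δ k ≤ κmg * Δmax := mul_le_mul_of_nonneg_left hΔkM hκmg.le
        have u2 : κmg * Δ k * Δ k ≤ κσ * Δ k :=
          mul_le_mul_of_nonneg_right (le_trans u1 hκσ1) hΔk.le
        calc κmg * Δ k ^ 2 = κmg * Δ k * Δ k := by ring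
        _ ≤ κσ * Δ k := u2
      have h3 := norm_sub_norm_le (gradient f (x k)) (g k)
      have h4 : ‖gradient f (x k) - g k‖ = ‖g k - gradient f (x k)‖ := norm_sub_rev _ _
      linarith [hFQg k]
    have hτ2 : tau (hessMat f (x k)) ≤ tau (H k) + κσ * Δ k := by
      have hlam : lambdaMin (H k) ≤ lambdaMin (hessMat f (x k)) + κmh * Δ k := by
        apply lambdaMin_le_lambdaMin (by positivity)
        intro u hu
        have he : ⟪u, mulVecE (hessMat f (x k)) u⟫
            = ⟪u, fderiv ℝ (gradient f) (x k) u⟫ := by rw [mulVecE_hessMat]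
        have hdiff : ⟪u, mulVecE (H k) u⟫ - ⟪u, fderiv ℝ (gradient f) (x k) u⟫
            = ⟪u, (mulVecL (H k) - fderiv ℝ (gradient f) (x k)) u⟫ := by
          rw [ContinuousLinearMap.sub_apply, inner_sub_right, mulVecL_apply]
        have hb := abs_inner_clm_le (mulVecL (H k) - fderiv ℝ (gradient f) (x k)) hu
        have hb2 := (abs_le.mp hb).2
        have hκ := hFQH k
        rw [he]
        have h5 : ⟪u, mulVecE (H k) u⟫ - ⟪u, fderiv ℝ (gradient f) (x k) u⟫ ≤ κmh * Δ k := by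
          rw [hdiff]; linarith
        linarith
      have hδ : (0:ℝ) ≤ κmh * Δ k := by positivity
      have hδ2 : κmh * Δ k ≤ κσ * Δ k := mul_le_mul_of_nonneg_right hκσ2 hΔk.le
      have h6 : -lambdaMin (H k) ≤ max (-lambdaMin (H k)) 0 := le_max_left _ _
      have h7 : (0:ℝ) ≤ max (-lambdaMin (H k)) 0 := le_max_right _ _
      have h8 : tau (hessMat f (x k)) = max (-lambdaMin (hessMat f (x k))) 0 := rfl
      have h9 : tau (H k) = max (-lambdaMin (H k)) 0 := rfl
      rw [h8, h9]
      apply max_le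
      · linarith
      · linarith
    refine max_le ?_ ?_
    · exact hg2.trans (by linarith [le_max_left ‖g k‖ (tau (H k))])
    · exact hτ2.trans (by linarith [le_max_right ‖g k‖ (tau (H k))])
  have hσmlow : ∀ k < K, ε - κσ * Δ k ≤ σm k := by
    intro k hk
    have := hσle k
    have := hcrit k hk
    linarith
  have hop : ∀ k, 0 < opNorm (H k) + 1 := fun k => by linarith [opNorm_nonneg' (H k)]
  have hopκH : ∀ k, opNorm (H k) + 1 ≤ κH := fun k => by linarith [hHnorm k]
  have hkey : ∀ k < K, Δ k * (C1 + κσ) ≤ ε → Δ k * (C2 + κσ) ≤ ε →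
      (ηS ≤ ρ k ∧ μc * Δ k ≤ σm k) := by
    intro k hkK h1 h2
    have hΔk := hΔpos k
    have hΔkM := hΔub k
    have hσml := hσmlow k hkK
    have hμ : μc * Δ k ≤ σm k := by
      have := mul_le_mul_of_nonneg_right hC1μ hΔk.le
      linarith
    refine ⟨?_, hμ⟩
    have hρk := hρ k
    have hdk := hdec k
    set md := m k (x k) - m k (x k + s k) with hmddef
    have h2κmf : (0:ℝ) ≤ 2 * κmf := by positivity
    have hβ : (0:ℝ) < κs * (1 - ηS) := by positivity
    have hmain : 2 * κmf * Δ k ^ 3 ≤ (1 - ηS) * md := by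
      rcases le_total (tau (H k)) ‖g k‖ with hc | hc
      · have hG : ε - κσ * Δ k ≤ ‖g k‖ := by
          rw [hσm, max_eq_left hc] at hσml; exact hσml
        have hGC1 : C1 * Δ k ≤ ‖g k‖ := by linarith
        have hκHG : κH * Δ k ≤ ‖g k‖ := by
          have := mul_le_mul_of_nonneg_right hC1κH hΔk.le
          linarith
        have hminEq : min (Δ k) (‖g k‖ / (opNorm (H k) + 1)) = Δ k := by
          apply min_eq_left
          rw [le_div_iff₀ (hop k)]
          have := mul_le_mul_of_nonneg_left (hopκH k) hΔk.le
          linarith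
        rw [hminEq] at hdk
        have hmd1 : κs * (‖g k‖ * Δ k) ≤ md :=
          le_trans (mul_le_mul_of_nonneg_left (le_max_left _ _) hκs0.le) hdk
        have hA : 2 * κmf * Δmax * Δ k ≤ κs * (1 - ηS) * ‖g k‖ := by
          have h30 : 2 * κmf * Δmax / (κs * (1 - ηS)) * Δ k ≤ ‖g k‖ :=
            le_trans (mul_le_mul_of_nonneg_right hC1A hΔk.le) hGC1
          have h31 := mul_le_mul_of_nonneg_left h30 hβ.le
          have h32 : κs * (1 - ηS) * (2 * κmf * Δmax / (κs * (1 - ηS)) * Δ k)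
              = 2 * κmf * Δmax * Δ k := by
            field_simp
          linarith
        have q1 : 2 * κmf * Δ k * Δ k ^ 2 ≤ 2 * κmf * Δmax * Δ k ^ 2 :=
          mul_le_mul_of_nonneg_right (mul_le_mul_of_nonneg_left hΔkM h2κmf) (sq_nonneg _)
        have q2 : 2 * κmf * Δmax * Δ k * Δ k ≤ κs * (1 - ηS) * ‖g k‖ * Δ k :=
          mul_le_mul_of_nonneg_right hA hΔk.le
        have q3 := mul_le_mul_of_nonneg_left hmd1 h1ηS.le
        linarith [q1, q2, q3]
      · have hT : ε - κσ * Δ k ≤ tau (H k) := by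
          rw [hσm, max_eq_right hc] at hσml; exact hσml
        have hTC2 : C2 * Δ k ≤ tau (H k) := by linarith
        have hmd1 : κs * (tau (H k) * Δ k ^ 2) ≤ md :=
          le_trans (mul_le_mul_of_nonneg_left (le_max_right _ _) hκs0.le) hdk
        have hA : 2 * κmf * Δ k ≤ κs * (1 - ηS) * tau (H k) := by
          have h30 : 2 * κmf / (κs * (1 - ηS)) * Δ k ≤ tau (H k) :=
            le_trans (mul_le_mul_of_nonneg_right hC2A hΔk.le) hTC2
          have h31 := mul_le_mul_of_nonneg_left h30 hβ.le
          have h32 : κs * (1 - ηS) * (2 * κmf / (κs * (1 - ηS)) * Δ k)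
              = 2 * κmf * Δ k := by
            field_simp
          linarith
        have q2 : 2 * κmf * Δ k * Δ k ^ 2 ≤ κs * (1 - ηS) * tau (H k) * Δ k ^ 2 :=
          mul_le_mul_of_nonneg_right hA (sq_nonneg _)
        have q3 := mul_le_mul_of_nonneg_left hmd1 h1ηS.le
        linarith [q2, q3]
    have hmdpos : 0 < md := by
      rcases le_or_gt md 0 with hmd0 | hmd0
      · exfalso
        have w1 : (0:ℝ) < 2 * κmf * Δ k ^ 3 := by positivity
        have w2 := mul_le_mul_of_nonneg_left hmd0 h1ηS.le
        linarith [w1, w2, hmain]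
      · exact hmd0
    rw [hρk, le_div_iff₀ hmdpos]
    have e1 := abs_le.mp (hFQf k)
    have e2 := abs_le.mp (hFQfs k)
    have hmdeq : md = m k (x k) - m k (x k + s k) := hmddef
    linarith [e1.1, e1.2, e2.1, e2.2, hmain, hmdeq]
  have hΔlb : ∀ k, k ≤ K → Δmin ≤ Δ k := by
    intro k
    induction k with
    | zero => exact fun _ => hΔmin1
    | succ k ih =>
      intro hkK
      have hkK' : k < K := lt_of_lt_of_le (Nat.lt_succ_self k) hkK
      have ihk := ih hkK'.le
      have hΔk := hΔpos k
      have hγd := mul_le_mul_of_nonneg_right hγdec1.le hΔk.le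
      have hγi := mul_le_mul_of_nonneg_right hγinc.le hΔk.le
      by_cases hcase : Δmin ≤ γdec * Δ k
      · by_cases hb1 : ηS ≤ ρ k ∧ μc * Δ k ≤ σm k
        · rw [(hVS k hb1).2]
          refine le_min ?_ ?_
          · linarith
          · linarith [hΔub k]
        · by_cases hb2 : ηU ≤ ρ k ∧ μc * Δ k ≤ σm k
          · rw [(hS k hb1 hb2).2]; linarith
          · rw [(hU k hb2).2]; exact hcase
      · push_neg at hcase
        have hC1κσ : (0:ℝ) < C1 + κσ := by linarith
        have hC2κσ : (0:ℝ) < C2 + κσ := by linarith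
        have h1 : Δ k * (C1 + κσ) ≤ ε := by
          have h0 : γdec * Δ k < γdec * (ε / (C1 + κσ)) := by
            rw [← mul_div_assoc]; exact lt_of_lt_of_le hcase hΔmin2
          have h0' : Δ k < ε / (C1 + κσ) := lt_of_mul_lt_mul_left h0 hγdec0.le
          rw [lt_div_iff₀ hC1κσ] at h0'
          linarith
        have h2 : Δ k * (C2 + κσ) ≤ ε := by
          have h0 : γdec * Δ k < γdec * (ε / (C2 + κσ)) := by
            rw [← mul_div_assoc]; exact lt_of_lt_of_le hcase hΔmin3
          have h0' : Δ k < ε / (C2 + κσ) := lt_of_mul_lt_mul_left h0 hγdec0.le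
          rw [lt_div_iff₀ hC2κσ] at h0'
          linarith
        have hvs := hkey k hkK' h1 h2
        rw [(hVS k hvs).2]
        refine le_min (by linarith) (le_trans ihk (hΔub k))
  set P : ℕ → Prop := fun k => ηU ≤ ρ k ∧ μc * Δ k ≤ σm k with hPdef
  have hPx : ∀ k, P k → x (k + 1) = x k + s k ∧ Δ (k + 1) ≤ γinc * Δ k := by
    intro k hPk
    have hPk' : ηU ≤ ρ k ∧ μc * Δ k ≤ σm k := hPk
    by_cases hb1 : ηS ≤ ρ k
    · obtain ⟨ha, hb⟩ := hVS k ⟨hb1, hPk'.2⟩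
      exact ⟨ha, hb ▸ min_le_left _ _⟩
    · obtain ⟨ha, hb⟩ := hS k (fun hccc => hb1 hccc.1) hPk'
      refine ⟨ha, ?_⟩
      rw [hb]
      have := mul_le_mul_of_nonneg_right hγinc.le (hΔpos k).le
      linarith
  have hPneg : ∀ k, ¬ P k → x (k + 1) = x k ∧ Δ (k + 1) = γdec * Δ k := by
    intro k hk
    exact hU k hk
  set δ1 := ηU * κs * min (ε * Δmin) (ε * Δmin ^ 2) / c with hδ1def
  have hminpos : 0 < min (ε * Δmin) (ε * Δmin ^ 2) := lt_min (by positivity) (by positivity)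
  have hδ1pos : 0 < δ1 := by
    rw [hδ1def]
    exact div_pos (by positivity) hcpos
  have hPdec : ∀ k, k < K → P k → δ1 ≤ f (x k) - f (x (k + 1)) := by
    intro k hkK hPk
    have hPk' : ηU ≤ ρ k ∧ μc * Δ k ≤ σm k := hPk
    have hΔk := hΔpos k
    have hΔlbk := hΔlb k hkK.le
    have hσml := hσmlow k hkK
    have hμΔ := hPk'.2
    have hρk := hρ k
    have hdk := hdec k
    have hcσ : ε ≤ c * σm k := by
      rw [← mul_le_mul_iff_left₀ hμc]
      have hexp : c * σm k * μc = μc * σm k + κσ * σm k := by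
        rw [hcdef]; field_simp
      rw [hexp]
      have v1 := mul_le_mul_of_nonneg_left hμΔ hκσpos.le
      have v2 := mul_le_mul_of_nonneg_right
        (show ε ≤ σm k + κσ * Δ k by linarith) hμc.le
      linarith
    have hσmpos : 0 < σm k := by
      rcases le_or_gt (σm k) 0 with hh | hh
      · exfalso
        have := mul_le_mul_of_nonneg_left hh hcpos.le
        have hc0 : c * (0:ℝ) = 0 := mul_zero c
        linarith
      · exact hh
    set md := m k (x k) - m k (x k + s k) with hmddef
    have hcmd : κs * min (ε * Δmin) (ε * Δmin ^ 2) ≤ c * md := by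
      rcases le_total (tau (H k)) ‖g k‖ with hc' | hc'
      · have hGeq : σm k = ‖g k‖ := by rw [hσm]; exact max_eq_left hc'
        rw [hGeq] at hcσ
        have hd4 : Δmin * (c * κH) ≤ ε := by
          rw [← le_div_iff₀ (by positivity)]; exact hΔmin4
        have hgκH : Δmin * κH ≤ ‖g k‖ := by
          have h20 : c * (Δmin * κH) ≤ c * ‖g k‖ := by linarith
          exact le_of_mul_le_mul_left h20 hcpos
        have hmin2 : Δmin ≤ ‖g k‖ / (opNorm (H k) + 1) := by
          rw [le_div_iff₀ (hop k)]
          have := mul_le_mul_of_nonneg_left (hopκH k) hΔminpos.le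
          linarith
        have hminlb : Δmin ≤ min (Δ k) (‖g k‖ / (opNorm (H k) + 1)) := le_min hΔlbk hmin2
        have hmd1 : κs * (‖g k‖ * Δmin) ≤ md := by
          have w1 : ‖g k‖ * Δmin ≤ ‖g k‖ * min (Δ k) (‖g k‖ / (opNorm (H k) + 1)) :=
            mul_le_mul_of_nonneg_left hminlb (norm_nonneg (g k))
          have w2 := le_max_left (‖g k‖ * min (Δ k) (‖g k‖ / (opNorm (H k) + 1)))
            (tau (H k) * Δ k ^ 2)
          exact le_trans (mul_le_mul_of_nonneg_left (le_trans w1 w2) hκs0.le) hdk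
        calc κs * min (ε * Δmin) (ε * Δmin ^ 2) ≤ κs * (ε * Δmin) :=
              mul_le_mul_of_nonneg_left (min_le_left _ _) hκs0.le
        _ ≤ κs * (c * ‖g k‖ * Δmin) :=
              mul_le_mul_of_nonneg_left
                (mul_le_mul_of_nonneg_right hcσ hΔminpos.le) hκs0.le
        _ = c * (κs * (‖g k‖ * Δmin)) := by ring
        _ ≤ c * md := mul_le_mul_of_nonneg_left hmd1 hcpos.le
      · have hTeq : σm k = tau (H k) := by rw [hσm]; exact max_eq_right hc'
        rw [hTeq] at hcσ
        have hmd1 : κs * (tau (H k) * Δmin ^ 2) ≤ md := by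
          have w0 : Δmin ^ 2 ≤ Δ k ^ 2 := pow_le_pow_left₀ hΔminpos.le hΔlbk 2
          have w1 : tau (H k) * Δmin ^ 2 ≤ tau (H k) * Δ k ^ 2 :=
            mul_le_mul_of_nonneg_left w0 (htau0 k)
          have w2 := le_max_right (‖g k‖ * min (Δ k) (‖g k‖ / (opNorm (H k) + 1)))
            (tau (H k) * Δ k ^ 2)
          exact le_trans (mul_le_mul_of_nonneg_left (le_trans w1 w2) hκs0.le) hdk
        calc κs * min (ε * Δmin) (ε * Δmin ^ 2) ≤ κs * (ε * Δmin ^ 2) :=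
              mul_le_mul_of_nonneg_left (min_le_right _ _) hκs0.le
        _ ≤ κs * (c * tau (H k) * Δmin ^ 2) :=
              mul_le_mul_of_nonneg_left
                (mul_le_mul_of_nonneg_right hcσ (sq_nonneg _)) hκs0.le
        _ = c * (κs * (tau (H k) * Δmin ^ 2)) := by ring
        _ ≤ c * md := mul_le_mul_of_nonneg_left hmd1 hcpos.le
    have hmdpos : 0 < md := by
      rcases le_or_gt md 0 with hh | hh
      · exfalso
        have w1 := mul_le_mul_of_nonneg_left hh hcpos.le
        have w2 := mul_pos hκs0 hminpos
        linarith
      · exact hh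
    rw [(hPx k hPk).1]
    have hfdec : f (x k) - f (x k + s k) = ρ k * md := by
      rw [hρk]
      rw [div_mul_cancel₀ _ hmdpos.ne']
    have hρηU := hPk'.1
    have h9 : ηU * md ≤ f (x k) - f (x k + s k) := by
      rw [hfdec]
      exact mul_le_mul_of_nonneg_right hρηU hmdpos.le
    have h10 : δ1 ≤ ηU * md := by
      rw [hδ1def, div_le_iff₀ hcpos]
      have := mul_le_mul_of_nonneg_left hcmd hηU.le
      linarith
    linarith
  set SC := (Finset.range K).filter P with hSCdef
  set UC := (Finset.range K).filter (fun k => ¬ P k) with hUCdef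
  have hcards : SC.card + UC.card = K := by
    show ((Finset.range K).filter P).card + ((Finset.range K).filter (fun k => ¬ P k)).card = K
    rw [Finset.card_filter_add_card_filter_not, Finset.card_range]
  have htel : ∑ k ∈ Finset.range K, (f (x k) - f (x (k + 1))) = f (x 0) - f (x K) :=
    Finset.sum_range_sub' (fun k => f (x k)) K
  have hsum1 : (SC.card : ℝ) * δ1 ≤ f (x 0) - flow := by
    have h11 : (SC.card : ℝ) * δ1 = ∑ _k ∈ SC, δ1 := by
      rw [Finset.sum_const, nsmul_eq_mul]
    have h12 : ∑ k ∈ SC, δ1 ≤ ∑ k ∈ SC, (f (x k) - f (x (k + 1))) := by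
      apply Finset.sum_le_sum
      intro k hk
      have hk' := Finset.mem_filter.mp hk
      exact hPdec k (Finset.mem_range.mp hk'.1) hk'.2
    have h13 : ∑ k ∈ SC, (f (x k) - f (x (k + 1)))
        ≤ ∑ k ∈ Finset.range K, (f (x k) - f (x (k + 1))) := by
      apply Finset.sum_le_sum_of_subset_of_nonneg (Finset.filter_subset _ _)
      intro k hk hknot
      have hnP : ¬ P k := fun h => hknot (Finset.mem_filter.mpr ⟨hk, h⟩)
      rw [(hPneg k hnP).1]
      simp
    have h14 := hflow (x K)
    rw [htel] at h13
    linarith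
  have hlog : Real.log (Δ K) ≤ Real.log (Δ 0)
      + ((SC.card : ℝ) * Real.log γinc + (UC.card : ℝ) * Real.log γdec) := by
    have htel2 : ∑ k ∈ Finset.range K, (Real.log (Δ (k + 1)) - Real.log (Δ k))
        = Real.log (Δ K) - Real.log (Δ 0) :=
      Finset.sum_range_sub (fun k => Real.log (Δ k)) K
    have hterm : ∀ k ∈ Finset.range K, Real.log (Δ (k + 1)) - Real.log (Δ k)
        ≤ (if P k then Real.log γinc else Real.log γdec) := by
      intro k _
      by_cases hPk : P k
      · rw [if_pos hPk]
        have h14 := (hPx k hPk).2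
        have h15 : Real.log (Δ (k + 1)) ≤ Real.log (γinc * Δ k) :=
          Real.log_le_log (hΔpos (k + 1)) h14
        rw [Real.log_mul (by positivity) (hΔpos k).ne'] at h15
        linarith
      · rw [if_neg hPk, (hPneg k hPk).2, Real.log_mul hγdec0.ne' (hΔpos k).ne']
        linarith
    have hsum2 := Finset.sum_le_sum hterm
    rw [htel2] at hsum2
    have hsplit : ∑ k ∈ Finset.range K, (if P k then Real.log γinc else Real.log γdec)
        = (SC.card : ℝ) * Real.log γinc + (UC.card : ℝ) * Real.log γdec := by
      rw [Finset.sum_ite, Finset.sum_const, Finset.sum_const, nsmul_eq_mul, nsmul_eq_mul]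
    rw [hsplit] at hsum2
    linarith
  set L := Real.log (1 / γdec) with hLdef
  have hL : L = -Real.log γdec := by rw [hLdef, one_div, Real.log_inv]
  have hLpos : 0 < L := by
    rw [hL]
    linarith [Real.log_neg hγdec0 hγdec1]
  have hlginc : 0 < Real.log γinc := Real.log_pos hγinc
  have hΔKlb : Real.log Δmin ≤ Real.log (Δ K) := Real.log_le_log hΔminpos (hΔlb K le_rfl)
  have hlogD : Real.log (Δ 0 / Δmin) = Real.log (Δ 0) - Real.log Δmin :=
    Real.log_div (hΔpos 0).ne' hΔminpos.ne'
  have hucb : (UC.card : ℝ) * L ≤ Real.log (Δ 0 / Δmin) + (SC.card : ℝ) * Real.log γinc := by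
    rw [hlogD, hL]
    linarith
  have hscb : (SC.card : ℝ) ≤ (f (x 0) - flow) / δ1 := by
    rw [le_div_iff₀ hδ1pos]; linarith
  have hKcast : (K : ℝ) = (SC.card : ℝ) + (UC.card : ℝ) := by exact_mod_cast hcards.symm
  have hfinal1 : (UC.card : ℝ) ≤ (Real.log (Δ 0 / Δmin) + (SC.card : ℝ) * Real.log γinc) / L := by
    rw [le_div_iff₀ hLpos]; exact hucb
  have hδ1eq : (f (x 0) - flow) / δ1
      = c * (f (x 0) - flow) / (ηU * κs * min (ε * Δmin) (ε * Δmin ^ 2)) := by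
    rw [hδ1def, div_div_eq_mul_div, mul_comm]
  calc (K : ℝ) = (SC.card : ℝ) + (UC.card : ℝ) := hKcast
  _ ≤ (SC.card : ℝ) + (Real.log (Δ 0 / Δmin) + (SC.card : ℝ) * Real.log γinc) / L := by
      linarith
  _ = Real.log (Δ 0 / Δmin) / L + (SC.card : ℝ) * (1 + Real.log γinc / L) := by
      field_simp
      ring
  _ ≤ Real.log (Δ 0 / Δmin) / L + ((f (x 0) - flow) / δ1) * (1 + Real.log γinc / L) := by
      have hfac : 0 ≤ 1 + Real.log γinc / L := by positivity
      have := mul_le_mul_of_nonneg_right hscb hfac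
      linarith
  _ = Real.log (Δ 0 / Δmin) / L
      + (1 + Real.log γinc / L) * (c * (f (x 0) - flow) / (ηU * κs * min (ε * Δmin) (ε * Δmin ^ 2))) := by
      rw [hδ1eq]; ring
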